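/- Let A be an invertible symmetric real n×n matrix, let t be an index, and let ṽ ∈ ℝⁿ. Form Ã by replacing both the t-th row and the t-th column of A with ṽ (so Ã is symmetric with Ã e_t = ṽ and e_tᵀ Ã = ṽᵀ). Then det(Ã) = [ (e_tᵀ A⁻¹ ṽ)² + (e_tᵀ A⁻¹ e_t) · ṽᵀ (e_t − A⁻¹ ṽ) ] · det(A). -/

import Mathlib

open Matrix

theorem stmt_4 {n : ℕ} (A : Matrix (Fin n) (Fin n) ℝ) (hsymm : A.IsSymm)
    (hinv : IsUnit A.det) (t : Fin n) (v : Fin n → ℝ)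
    (Atil : Matrix (Fin n) (Fin n) ℝ)
    (hAtil : ∀ i j, Atil i j = if i = t then v j else if j = t then v i else A i j) :
    Atil.det = (((A⁻¹.mulVec v) t) ^ 2
      + A⁻¹ t t * dotProduct v ((Pi.single t 1 : Fin n → ℝ) - A⁻¹.mulVec v)) * A.det := by
  classical
  set S := A⁻¹ with hS
  set e : Fin n → ℝ := Pi.single t 1 with he
  set a : Fin n → ℝ := fun j => v j - A t j with ha
  set U : Matrix (Fin n) (Fin 2) ℝ := Matrix.of (fun i k => if k = 0 then e i else a i) with hU
  set W : Matrix (Fin 2) (Fin n) ℝ :=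
    Matrix.of (fun k j => if k = 0 then (a - a t • e) j else e j) with hW
  have hSA : S * A = 1 := Matrix.nonsing_inv_mul A hinv
  have hAS : A * S = 1 := Matrix.mul_nonsing_inv A hinv
  have hSsymm : Sᵀ = S := by
    rw [hS, Matrix.transpose_nonsing_inv, hsymm]
  have het : e t = 1 := by simp [he]
  have hUW : Atil = A + U * W := by
    ext i j
    rw [hAtil]
    simp only [Matrix.add_apply, Matrix.mul_apply, Fin.sum_univ_two, hU, hW, Matrix.of_apply]
    by_cases hi : i = t <;> by_cases hj : j = t <;>
      simp [hi, hj, he, ha, Pi.single_apply, Pi.sub_apply, Pi.smul_apply, smul_eq_mul,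
        hsymm.apply i t]
  have hdet1 : Atil.det = A.det * (1 + W * (S * U)).det := by
    have h2 : Atil = A * (1 + S * U * W) := by
      rw [Matrix.mul_add, Matrix.mul_one, ← Matrix.mul_assoc, ← Matrix.mul_assoc, hAS,
        Matrix.one_mul, hUW]
    rw [h2, Matrix.det_mul, Matrix.det_one_add_mul_comm (S * U) W, ← Matrix.mul_assoc]
  have hdsym : ∀ x y : Fin n → ℝ, dotProduct x (S.mulVec y)
      = dotProduct (S.mulVec x) y := by
    intro x y
    rw [Matrix.dotProduct_mulVec, ← Matrix.mulVec_transpose, hSsymm]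
  have hse : S.mulVec e = fun j => S j t := by
    funext j
    simp [Matrix.mulVec, dotProduct, he, Pi.single_apply]
  have hde : ∀ x : Fin n → ℝ, dotProduct e x = x t := by
    intro x; simp [he, dotProduct, Pi.single_apply]
  have hde' : ∀ x : Fin n → ℝ, dotProduct x e = x t := by
    intro x; rw [dotProduct_comm]; exact hde x
  set p : Fin n → ℝ := S.mulVec v with hp
  have hSa : S.mulVec a = p - e := by
    have hcol : a = v - A.mulVec e := by
      funext j
      simp [ha, Matrix.mulVec, dotProduct, he, Pi.single_apply, hsymm.apply j t]
    rw [hcol, Matrix.mulVec_sub, Matrix.mulVec_mulVec, hSA, Matrix.one_mulVec, hp]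
  have key : ∀ (c : ℝ) (m : Fin n → ℝ),
      dotProduct (a - c • e) m = dotProduct a m - c * m t := by
    intro c m
    rw [sub_dotProduct, smul_dotProduct, hde, smul_eq_mul]
  have hN : ∀ k l, (W * (S * U)) k l
      = dotProduct (W k) (S.mulVec (fun i => U i l)) := by
    intro k l
    simp [Matrix.mul_apply, Matrix.mulVec, dotProduct]
  have hcol0 : (fun i => U i 0) = e := by funext i; simp [hU]
  have hcol1 : (fun i => U i 1) = a := by funext i; simp [hU]
  have hrow0 : W 0 = a - a t • e := by funext j; simp [hW]
  have hrow1 : W 1 = e := by funext j; simp [hW]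
  have hN00 : (W * (S * U)) 0 0 = (p t - 1) - a t * S t t := by
    rw [hN, hcol0, hrow0, key, hdsym, hde', hSa, hse]
    simp [Pi.sub_apply, het]
  have hN01 : (W * (S * U)) 0 1
      = (dotProduct a p - a t) - a t * (p t - 1) := by
    rw [hN, hcol1, hrow0, key, hSa, dotProduct_sub, hde']
    simp [Pi.sub_apply, het]
  have hN10 : (W * (S * U)) 1 0 = S t t := by
    rw [hN, hcol0, hrow1, hde, hse]
  have hN11 : (W * (S * U)) 1 1 = p t - 1 := by
    rw [hN, hcol1, hrow1, hde, hSa]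
    simp [Pi.sub_apply, het]
  have hap : dotProduct a p = dotProduct v p - v t := by
    have hcol : a = v - (fun j => A j t) := by
      funext j; simp [ha, hsymm.apply j t]
    have h2 : S.mulVec (fun j => A j t) = e := by
      have h3 : (fun j => A j t) = A.mulVec e := by
        funext j; simp [Matrix.mulVec, dotProduct, he, Pi.single_apply]
      rw [h3, Matrix.mulVec_mulVec, hSA, Matrix.one_mulVec]
    have h1 : dotProduct (fun j => A j t) p = v t := by
      rw [hp, hdsym, h2, hde]
    rw [hcol, sub_dotProduct, h1]
  have hvp : dotProduct v (e - p) = v t - dotProduct v p := by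
    rw [dotProduct_sub, hde']
  rw [hdet1, Matrix.det_fin_two]
  simp only [Matrix.add_apply, Matrix.one_apply_eq, Matrix.one_apply_ne (by decide : (0:Fin 2) ≠ 1),
    Matrix.one_apply_ne (by decide : (1:Fin 2) ≠ 0), hN00, hN01, hN10, hN11]
  rw [hvp, hap]
  ring
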